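/- arXiv:2208.06152 — 8 statements merged into one kernel-verified Lean document; each statement's English description precedes it below -/
import Mathlib

section
/- Let B, G be symmetric positive definite, ρ > 0, H = ((1/ρ)G + Sᵀ A B⁻¹ Aᵀ S)⁻¹, F = ((1/ρ)B + Aᵀ S G⁻¹ Sᵀ A)⁻¹, and W = Sᵀ A F Aᵀ S. Then G H G = ρ G − ρ W. -/
open Matrix

lemma smul_posDef {k : ℕ} {M : Matrix (Fin k) (Fin k) ℝ} (hM : M.PosDef) {c : ℝ} (hc : 0 < c) :
    (c • M).PosDef := by
  refine ⟨?_, fun x hx => ?_⟩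
  · have h := hM.1
    simp only [Matrix.IsHermitian, conjTranspose_smul] at h ⊢
    rw [h, star_trivial]
  · exact (hM.smul hc).2 hx

theorem stmt_3 {m n p : ℕ} (A : Matrix (Fin m) (Fin n) ℝ) (S : Matrix (Fin m) (Fin p) ℝ)
    (B : Matrix (Fin n) (Fin n) ℝ) (G : Matrix (Fin p) (Fin p) ℝ)
    (hB : B.PosDef) (hG : G.PosDef) (ρ : ℝ) (hρ : 0 < ρ) :
    let H := (ρ⁻¹ • G + Sᵀ * A * B⁻¹ * Aᵀ * S)⁻¹
    let F := (ρ⁻¹ • B + Aᵀ * S * G⁻¹ * Sᵀ * A)⁻¹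
    let W := Sᵀ * A * F * Aᵀ * S
    G * H * G = ρ • G - ρ • W := by
  intro H F W
  set U : Matrix (Fin p) (Fin n) ℝ := Sᵀ * A with hU
  have hρ' : (0:ℝ) < ρ⁻¹ := by positivity
  have hM : (ρ⁻¹ • G + Sᵀ * A * B⁻¹ * Aᵀ * S).PosDef := by
    apply (smul_posDef hG hρ').add_posSemidef
    have := (hB.inv.posSemidef).mul_mul_conjTranspose_same U
    rw [conjTranspose_eq_transpose_of_trivial] at this
    simpa [hU, Matrix.mul_assoc] using this
  have hF' : (ρ⁻¹ • B + Aᵀ * S * G⁻¹ * Sᵀ * A).PosDef := by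
    apply (smul_posDef hB hρ').add_posSemidef
    have := (hG.inv.posSemidef).mul_mul_conjTranspose_same Uᵀ
    rw [conjTranspose_eq_transpose_of_trivial, transpose_transpose] at this
    simpa [hU, Matrix.mul_assoc] using this
  have hGdet : IsUnit G.det := isUnit_iff_isUnit_det _ |>.1 hG.isUnit
  have hGinv : G * G⁻¹ = 1 := mul_nonsing_inv _ hGdet
  have hGinv' : G⁻¹ * G = 1 := nonsing_inv_mul _ hGdet
  have hFdet : IsUnit (ρ⁻¹ • B + Aᵀ * S * G⁻¹ * Sᵀ * A).det :=
    isUnit_iff_isUnit_det _ |>.1 hF'.isUnit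
  have hFinv : (ρ⁻¹ • B + Aᵀ * S * G⁻¹ * Sᵀ * A) * F = 1 := mul_nonsing_inv _ hFdet
  have hBdet : IsUnit B.det := isUnit_iff_isUnit_det _ |>.1 hB.isUnit
  have hBinv : B⁻¹ * B = 1 := nonsing_inv_mul _ hBdet
  have key : B⁻¹ * (Uᵀ * G⁻¹ * U * F) = B⁻¹ - ρ⁻¹ • F := by
    have h1 : Uᵀ * G⁻¹ * U = (ρ⁻¹ • B + Aᵀ * S * G⁻¹ * Sᵀ * A) - ρ⁻¹ • B := by
      rw [hU]; simp [Matrix.mul_assoc, transpose_mul]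
    rw [h1, Matrix.sub_mul, hFinv, Matrix.smul_mul, Matrix.mul_sub, Matrix.mul_one,
      Matrix.mul_smul, ← Matrix.mul_assoc, hBinv, Matrix.one_mul]
  have hMeq : Sᵀ * A * B⁻¹ * Aᵀ * S = U * B⁻¹ * Uᵀ := by
    rw [hU, transpose_mul, transpose_transpose, Matrix.mul_assoc]
  have hW : W = U * F * Uᵀ := by
    show Sᵀ * A * F * Aᵀ * S = U * F * Uᵀ
    rw [hU, transpose_mul, transpose_transpose, Matrix.mul_assoc]
  set X : Matrix (Fin p) (Fin p) ℝ := ρ • (G⁻¹ * (G - W) * G⁻¹) with hX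
  have hMX : (ρ⁻¹ • G + Sᵀ * A * B⁻¹ * Aᵀ * S) * X = 1 := by
    rw [hX, hW, hMeq]
    have h2 : U * B⁻¹ * Uᵀ * G⁻¹ * (U * F * Uᵀ) * G⁻¹
        = U * B⁻¹ * Uᵀ * G⁻¹ - ρ⁻¹ • (U * F * Uᵀ * G⁻¹) := by
      calc U * B⁻¹ * Uᵀ * G⁻¹ * (U * F * Uᵀ) * G⁻¹
          = U * (B⁻¹ * (Uᵀ * G⁻¹ * U * F)) * Uᵀ * G⁻¹ := by
            simp only [Matrix.mul_assoc]
        _ = U * (B⁻¹ - ρ⁻¹ • F) * Uᵀ * G⁻¹ := by rw [key]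
        _ = U * B⁻¹ * Uᵀ * G⁻¹ - ρ⁻¹ • (U * F * Uᵀ * G⁻¹) := by
            rw [Matrix.mul_sub, Matrix.mul_smul, Matrix.sub_mul, Matrix.sub_mul,
              Matrix.smul_mul, Matrix.smul_mul]
    calc (ρ⁻¹ • G + U * B⁻¹ * Uᵀ) * (ρ • (G⁻¹ * (G - U * F * Uᵀ) * G⁻¹))
        = ρ • (ρ⁻¹ • (G * (G⁻¹ * (G - U * F * Uᵀ) * G⁻¹))
            + U * B⁻¹ * Uᵀ * (G⁻¹ * (G - U * F * Uᵀ) * G⁻¹)) := by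
          rw [Matrix.mul_smul, Matrix.add_mul, Matrix.smul_mul, smul_add, smul_smul,
            mul_comm ρ ρ⁻¹, ← smul_smul]
      _ = ρ • (ρ⁻¹ • (1 - U * F * Uᵀ * G⁻¹)
            + (U * B⁻¹ * Uᵀ * G⁻¹ - (U * B⁻¹ * Uᵀ * G⁻¹ - ρ⁻¹ • (U * F * Uᵀ * G⁻¹)))) := by
          rw [← h2]
          congr 1
          rw [Matrix.mul_sub, Matrix.sub_mul, hGinv']
          simp only [Matrix.one_mul, Matrix.mul_sub, ← Matrix.mul_assoc, hGinv,
            Matrix.one_mul]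
      _ = 1 := by
          rw [sub_sub_cancel, ← smul_add, sub_add_cancel, smul_smul,
            mul_inv_cancel₀ hρ.ne', one_smul]
  have hH : H = X := inv_eq_right_inv hMX
  rw [hH, hX]
  rw [Matrix.mul_smul, Matrix.smul_mul, ← Matrix.mul_assoc, ← Matrix.mul_assoc, hGinv,
    Matrix.one_mul, Matrix.mul_assoc, hGinv', Matrix.mul_one, smul_sub]
end

section
/- Let B, G be symmetric positive definite, ρ > 0, H = ((1/ρ)G + Sᵀ A B⁻¹ Aᵀ S)⁻¹, and Z = Aᵀ S H Sᵀ A. Then Z B⁻¹ Z = Z − (1/ρ) Aᵀ S H G H Sᵀ A. -/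
open Matrix

theorem stmt_5 {m n p : ℕ} (A : Matrix (Fin m) (Fin n) ℝ) (S : Matrix (Fin m) (Fin p) ℝ)
    (B : Matrix (Fin n) (Fin n) ℝ) (G : Matrix (Fin p) (Fin p) ℝ)
    (hB : B.PosDef) (hG : G.PosDef) (ρ : ℝ) (hρ : 0 < ρ) :
    let H := (ρ⁻¹ • G + Sᵀ * A * B⁻¹ * Aᵀ * S)⁻¹
    let Z := Aᵀ * S * H * Sᵀ * A
    Z * B⁻¹ * Z = Z - ρ⁻¹ • (Aᵀ * S * H * G * H * Sᵀ * A) := by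
  intro H Z
  set M := ρ⁻¹ • G + Sᵀ * A * B⁻¹ * Aᵀ * S with hM
  have hGs : (ρ⁻¹ • G).PosDef := by
    refine ⟨?_, fun x hx => ?_⟩
    · show (ρ⁻¹ • G)ᴴ = ρ⁻¹ • G
      have hGt : Gᵀ = G := by
        rw [← conjTranspose_eq_transpose_of_trivial]; exact hG.1
      simp [conjTranspose_smul, hGt]
    simpa only [Matrix.smul_apply, mul_smul_comm, smul_mul_assoc, ← Finsupp.smul_sum] using smul_pos (inv_pos.mpr hρ) (hG.2 hx)
  have hps : (Sᵀ * A * B⁻¹ * Aᵀ * S).PosSemidef := by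
    have : Sᵀ * A * B⁻¹ * Aᵀ * S = (Aᵀ * S)ᴴ * B⁻¹ * (Aᵀ * S) := by
      simp only [conjTranspose_mul, conjTranspose_eq_transpose_of_trivial,
        transpose_transpose, transpose_mul, Matrix.mul_assoc]
    rw [this]
    exact hB.posSemidef.inv.conjTranspose_mul_mul_same _
  have hMpd : M.PosDef := hGs.add_posSemidef hps
  have hHM : H * M = 1 := Matrix.nonsing_inv_mul M hMpd.det_pos.ne'.isUnit
  have key : Sᵀ * A * B⁻¹ * Aᵀ * S = M - ρ⁻¹ • G := by rw [hM, add_sub_cancel_left]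
  calc Z * B⁻¹ * Z
      = Aᵀ * S * (H * ((Sᵀ * A * B⁻¹ * Aᵀ * S) * H)) * Sᵀ * A := by
        simp only [Z, Matrix.mul_assoc]
    _ = Aᵀ * S * (H * ((M - ρ⁻¹ • G) * H)) * Sᵀ * A := by rw [key]
    _ = Aᵀ * S * (H - ρ⁻¹ • (H * G * H)) * Sᵀ * A := by
        rw [Matrix.sub_mul, Matrix.mul_sub, ← Matrix.mul_assoc H M H, hHM,
          Matrix.one_mul, Matrix.smul_mul, Matrix.mul_smul, Matrix.mul_assoc]
        simp [Matrix.mul_assoc]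
    _ = Z - ρ⁻¹ • (Aᵀ * S * H * G * H * Sᵀ * A) := by
        simp only [Z, Matrix.mul_sub, Matrix.sub_mul, Matrix.mul_smul, Matrix.smul_mul,
          Matrix.mul_assoc]
end

section
/- Let B, G be symmetric positive definite, ρ > 0, H = ((1/ρ)G + Sᵀ A B⁻¹ Aᵀ S)⁻¹, and Z = Aᵀ S H Sᵀ A. Then Aᵀ S H − Z B⁻¹ Aᵀ S H = (1/ρ) Aᵀ S H G H. -/
open Matrix

theorem stmt_6 {m n p : ℕ} (A : Matrix (Fin m) (Fin n) ℝ) (S : Matrix (Fin m) (Fin p) ℝ)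
    (B : Matrix (Fin n) (Fin n) ℝ) (G : Matrix (Fin p) (Fin p) ℝ)
    (hB : B.PosDef) (hG : G.PosDef) (ρ : ℝ) (hρ : 0 < ρ) :
    let H := (ρ⁻¹ • G + Sᵀ * A * B⁻¹ * Aᵀ * S)⁻¹
    let Z := Aᵀ * S * H * Sᵀ * A
    Aᵀ * S * H - Z * B⁻¹ * Aᵀ * S * H = ρ⁻¹ • (Aᵀ * S * H * G * H) := by
  intro H Z
  set M := ρ⁻¹ • G + Sᵀ * A * B⁻¹ * Aᵀ * S with hM
  have hpsd : (Sᵀ * A * B⁻¹ * Aᵀ * S).PosSemidef := by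
    have := (hB.inv.posSemidef).conjTranspose_mul_mul_same (Aᵀ * S)
    simpa [conjTranspose_mul, Matrix.mul_assoc] using this
  have hMpd : M.PosDef := by
    have h1 : (ρ⁻¹ • G).PosDef := by
      refine ⟨?_, fun x hx => ?_⟩
      · show (ρ⁻¹ • G)ᴴ = ρ⁻¹ • G
        rw [conjTranspose_smul, hG.1.eq, star_trivial]
      · have h := smul_pos (inv_pos.mpr hρ) (hG.2 hx)
        simp only [smul_eq_mul, Matrix.smul_apply, star_trivial, Finsupp.sum, Finset.mul_sum] at h ⊢
        refine lt_of_lt_of_eq h (Finset.sum_congr rfl fun i _ => Finset.sum_congr rfl fun j _ => by ring)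
    exact h1.add_posSemidef hpsd
  have hHM : H * M = 1 := Matrix.nonsing_inv_mul M hMpd.det_pos.ne'.isUnit
  have key : Z * B⁻¹ * Aᵀ * S * H = Aᵀ * S * (H * (Sᵀ * A * B⁻¹ * Aᵀ * S)) * H := by
    simp [Z, Matrix.mul_assoc]
  have hsub : Sᵀ * A * B⁻¹ * Aᵀ * S = M - ρ⁻¹ • G := by
    rw [hM]; ring_nf; abel
  rw [key, hsub, Matrix.mul_sub, hHM, Matrix.mul_smul]
  simp [Matrix.mul_sub, Matrix.sub_mul, Matrix.mul_smul, Matrix.smul_mul,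
    Matrix.mul_assoc]
end

section
/- Let Y ∈ ℝ^{n×p} and ρ > 0, and let σ = λ_max(YYᵀ). Then λ_max(Yᵀ((1/ρ)I + YYᵀ)⁻¹Y) ≤ ρσ/(1 + ρσ) < 1. -/
open Matrix

theorem stmt_8 {n p : ℕ} (Y : Matrix (Fin n) (Fin p) ℝ) (ρ σ : ℝ) (hρ : 0 < ρ)
    (hσ : IsGreatest {r : ℝ | ∃ v : Fin n → ℝ, v ≠ 0 ∧ (Y * Yᵀ) *ᵥ v = r • v} σ) :
    (∀ r : ℝ,
        (∃ w : Fin p → ℝ, w ≠ 0 ∧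
          (Yᵀ * (ρ⁻¹ • (1 : Matrix (Fin n) (Fin n) ℝ) + Y * Yᵀ)⁻¹ * Y) *ᵥ w = r • w) →
        r ≤ ρ * σ / (1 + ρ * σ)) ∧
      ρ * σ / (1 + ρ * σ) < 1 := by
  set A : Matrix (Fin n) (Fin n) ℝ := Y * Yᵀ with hA
  set B : Matrix (Fin n) (Fin n) ℝ := ρ⁻¹ • (1 : Matrix (Fin n) (Fin n) ℝ) + A with hBdef
  -- A is positive semidefinite
  have hApsd : A.PosSemidef := by
    have := Matrix.posSemidef_self_mul_conjTranspose Y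
    rwa [Matrix.conjTranspose_eq_transpose_of_trivial] at this
  -- the scaled identity is positive definite
  have hIpd : (ρ⁻¹ • (1 : Matrix (Fin n) (Fin n) ℝ)).PosDef := by
    rw [Matrix.posDef_iff_dotProduct_mulVec]
    constructor
    · unfold Matrix.IsHermitian
      rw [Matrix.conjTranspose_smul]
      simp
    · intro x hx
      have hxx : 0 < x ⬝ᵥ x := by
        rcases (dotProduct_self_eq_zero (v := x)).not.mpr hx with h
        have : 0 ≤ x ⬝ᵥ x := Finset.sum_nonneg fun i _ => mul_self_nonneg _
        cases this.lt_or_eq with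
        | inl h' => exact h'
        | inr h' => exact absurd h'.symm h
      have : (ρ⁻¹ • (1 : Matrix (Fin n) (Fin n) ℝ)) *ᵥ x = ρ⁻¹ • x := by
        rw [Matrix.smul_mulVec, Matrix.one_mulVec]
      rw [this]
      simp only [star_trivial, dotProduct_smul, smul_eq_mul]
      positivity
  have hBpd : B.PosDef := hIpd.add_posSemidef hApsd
  have hBunit : IsUnit B := hBpd.isUnit
  have hBinv : B * B⁻¹ = 1 := Matrix.mul_nonsing_inv B ((Matrix.isUnit_iff_isUnit_det B).mp hBunit)
  -- σ ≥ 0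
  obtain ⟨v₀, hv₀ne, hv₀⟩ := hσ.1
  have hv₀pos : 0 < v₀ ⬝ᵥ v₀ := by
    have h0 : 0 ≤ v₀ ⬝ᵥ v₀ := Finset.sum_nonneg fun i _ => mul_self_nonneg _
    cases h0.lt_or_eq with
    | inl h' => exact h'
    | inr h' => exact absurd (dotProduct_self_eq_zero.mp h'.symm) hv₀ne
  have key : ∀ v : Fin n → ℝ, v ⬝ᵥ (A *ᵥ v) = (Yᵀ *ᵥ v) ⬝ᵥ (Yᵀ *ᵥ v) := by
    intro v
    rw [hA, ← Matrix.mulVec_mulVec, Matrix.dotProduct_mulVec, ← Matrix.mulVec_transpose]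
  have hσ0 : 0 ≤ σ := by
    have h1 : v₀ ⬝ᵥ (A *ᵥ v₀) = σ * (v₀ ⬝ᵥ v₀) := by rw [hv₀, dotProduct_smul, smul_eq_mul]
    have h2 : 0 ≤ v₀ ⬝ᵥ (A *ᵥ v₀) := by
      rw [key]; exact Finset.sum_nonneg fun i _ => mul_self_nonneg _
    nlinarith
  have hden : (0:ℝ) < 1 + ρ * σ := by nlinarith
  constructor
  · rintro r ⟨w, hwne, hEq⟩
    rcases le_or_gt r 0 with hr | hr
    · exact hr.trans (by positivity)
    -- r > 0 case
    set v : Fin n → ℝ := Y *ᵥ w with hv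
    have hvne : v ≠ 0 := by
      intro h0
      apply hwne
      have : (Yᵀ * B⁻¹ * Y) *ᵥ w = Yᵀ *ᵥ (B⁻¹ *ᵥ v) := by
        rw [hv, Matrix.mulVec_mulVec, Matrix.mulVec_mulVec]
      rw [this, h0] at hEq
      simp only [Matrix.mulVec_zero] at hEq
      have := hEq.symm
      rcases smul_eq_zero.mp this with h | h
      · exact absurd h hr.ne'
      · exact h
    -- matrix identity: (A * B⁻¹) *ᵥ v = r • v
    have step1 : (A * B⁻¹) *ᵥ v = r • v := by
      have := congrArg (fun x => Y *ᵥ x) hEq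
      simp only [Matrix.mulVec_smul] at this
      rw [Matrix.mulVec_mulVec, ← Matrix.mul_assoc, ← Matrix.mul_assoc] at this
      rw [hv, Matrix.mulVec_mulVec]
      exact this
    -- commute: B * (A * B⁻¹) = A
    have hcomm : B * A = A * B := by
      rw [hBdef]
      simp only [Matrix.add_mul, Matrix.mul_add, Matrix.smul_mul, Matrix.mul_smul,
        Matrix.one_mul, Matrix.mul_one]
    have step2 : A *ᵥ v = r • (B *ᵥ v) := by
      have := congrArg (fun x => B *ᵥ x) step1
      simp only [Matrix.mulVec_smul, Matrix.mulVec_mulVec] at this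
      rw [← Matrix.mul_assoc, hcomm, Matrix.mul_assoc, hBinv, Matrix.mul_one] at this
      exact this
    have step3 : (1 - r) • (A *ᵥ v) = (r / ρ) • v := by
      have hBv : B *ᵥ v = ρ⁻¹ • v + A *ᵥ v := by
        rw [hBdef, Matrix.add_mulVec, Matrix.smul_mulVec, Matrix.one_mulVec]
      rw [hBv, smul_add, smul_smul] at step2
      rw [sub_smul, one_smul, div_eq_mul_inv]
      nth_rewrite 1 [step2]
      abel
    -- take inner products
    have hvv : 0 < v ⬝ᵥ v := by
      have h0 : 0 ≤ v ⬝ᵥ v := Finset.sum_nonneg fun i _ => mul_self_nonneg _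
      cases h0.lt_or_eq with
      | inl h' => exact h'
      | inr h' => exact absurd (dotProduct_self_eq_zero.mp h'.symm) hvne
    have hc : 0 ≤ v ⬝ᵥ (A *ᵥ v) := by
      rw [key]; exact Finset.sum_nonneg fun i _ => mul_self_nonneg _
    have hdot : (1 - r) * (v ⬝ᵥ (A *ᵥ v)) = (r / ρ) * (v ⬝ᵥ v) := by
      have := congrArg (fun x => v ⬝ᵥ x) step3
      simpa [dotProduct_smul] using this
    have hrρ : 0 < r / ρ := div_pos hr hρ
    have h1r : 0 < 1 - r := by
      rcases lt_or_ge 0 (1 - r) with h | h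
      · exact h
      · nlinarith
    -- v is an eigenvector of A
    have heig : A *ᵥ v = (r / (ρ * (1 - r))) • v := by
      have := congrArg (fun x => (1 - r)⁻¹ • x) step3
      simp only [smul_smul] at this
      rw [inv_mul_cancel₀ h1r.ne', one_smul] at this
      rw [this]
      congr 1
      rw [div_eq_mul_inv, div_eq_mul_inv, mul_inv]
      ring
    have ht : r / (ρ * (1 - r)) ≤ σ := hσ.2 ⟨v, hvne, heig⟩
    have hρr : 0 < ρ * (1 - r) := mul_pos hρ h1r
    rw [div_le_iff₀ hρr] at ht
    rw [le_div_iff₀ hden]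
    nlinarith
  · rw [div_lt_one hden]; nlinarith
end

section
/- Let Y ∈ ℝ^{n×p}, ρ > 0, and W̄ = Yᵀ((1/ρ)I + YYᵀ)⁻¹Y. Then W̄² ⪯ (ρσ/(1+ρσ)) W̄, where σ = λ_max(YYᵀ) and ⪯ denotes the Loewner order. -/
open Matrix

theorem stmt_9 {n p : ℕ} (Y : Matrix (Fin n) (Fin p) ℝ) (ρ σ : ℝ) (hρ : 0 < ρ)
    (hσ : IsGreatest {r : ℝ | ∃ v : Fin n → ℝ, v ≠ 0 ∧ (Y * Yᵀ) *ᵥ v = r • v} σ) :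
    let Wbar := Yᵀ * (ρ⁻¹ • (1 : Matrix (Fin n) (Fin n) ℝ) + Y * Yᵀ)⁻¹ * Y
    ((ρ * σ / (1 + ρ * σ)) • Wbar - Wbar * Wbar).PosSemidef := by
  intro Wbar
  set A : Matrix (Fin n) (Fin n) ℝ := ρ⁻¹ • (1 : Matrix (Fin n) (Fin n) ℝ) + Y * Yᵀ with hAdef
  set c : ℝ := ρ * σ / (1 + ρ * σ) with hcdef
  -- Y * Yᵀ is PSD
  have hYY : (Y * Yᵀ).PosSemidef := by
    have := posSemidef_self_mul_conjTranspose Y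
    rwa [conjTranspose_eq_transpose_of_trivial] at this
  have hH : (Y * Yᵀ).IsHermitian := hYY.1
  -- σ is nonnegative
  obtain ⟨v, hv, hvE⟩ := hσ.1
  have hvv : 0 < v ⬝ᵥ v := by
    rcases lt_or_eq_of_le (dotProduct_star_self_nonneg v) with h | h
    · simpa using h
    · exact absurd (dotProduct_star_self_eq_zero.mp (by simpa using h.symm)) hv
  have hσ0 : 0 ≤ σ := by
    have h1 : 0 ≤ star v ⬝ᵥ (Y * Yᵀ) *ᵥ v := hYY.dotProduct_mulVec_nonneg v
    rw [hvE] at h1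
    simp only [star_trivial, dotProduct_smul, smul_eq_mul] at h1
    nlinarith
  have hden : (0:ℝ) < 1 + ρ * σ := by positivity
  -- A is positive definite, hence invertible
  have hA : A.PosDef := by
    apply Matrix.PosDef.add_posSemidef _ hYY
    rw [smul_one_eq_diagonal]
    exact Matrix.posDef_diagonal_iff.mpr fun i => inv_pos.mpr hρ
  have hdet : IsUnit A.det := hA.det_pos.ne'.isUnit
  have hAinv : A * A⁻¹ = 1 := Matrix.mul_nonsing_inv A hdet
  have hAinvH : (A⁻¹)ᴴ = A⁻¹ := hA.inv.isHermitian
  -- every eigenvalue of Y * Yᵀ is at most σ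
  have heig : ∀ i, hH.eigenvalues i ≤ σ := by
    intro i
    refine hσ.2 ⟨⇑(hH.eigenvectorBasis i), ?_, hH.mulVec_eigenvectorBasis i⟩
    intro h
    exact hH.eigenvectorBasis.orthonormal.ne_zero i (by ext1 j; exact congrFun h j)
  -- spectral decomposition: σ • 1 - Y * Yᵀ is PSD
  set U : Matrix (Fin n) (Fin n) ℝ := (hH.eigenvectorUnitary : Matrix (Fin n) (Fin n) ℝ) with hUdef
  have hUU : U * star U = 1 := (Matrix.mem_unitaryGroup_iff).mp hH.eigenvectorUnitary.2
  have hspec : Y * Yᵀ = U * diagonal (RCLike.ofReal ∘ hH.eigenvalues) * star U :=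
    hH.spectral_theorem
  have hσ1 : σ • (1 : Matrix (Fin n) (Fin n) ℝ) - Y * Yᵀ
      = U * diagonal (fun i => σ - hH.eigenvalues i) * star U := by
    have h1 : σ • (1 : Matrix (Fin n) (Fin n) ℝ) = U * (σ • (1 : Matrix (Fin n) (Fin n) ℝ)) * star U := by
      rw [Matrix.mul_smul, Matrix.mul_one, Matrix.smul_mul, hUU]
    conv_lhs => rw [h1, hspec]
    rw [← Matrix.sub_mul, ← Matrix.mul_sub]
    have hD : σ • (1 : Matrix (Fin n) (Fin n) ℝ) - diagonal (RCLike.ofReal ∘ hH.eigenvalues)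
        = diagonal (fun i => σ - hH.eigenvalues i) := by
      rw [smul_one_eq_diagonal, diagonal_sub]
      congr 1
    rw [hD]
  have hPSD1 : (σ • (1 : Matrix (Fin n) (Fin n) ℝ) - Y * Yᵀ).PosSemidef := by
    rw [hσ1]
    have hd : (diagonal (fun i => σ - hH.eigenvalues i)).PosSemidef :=
      posSemidef_diagonal_iff.mpr fun i => sub_nonneg.mpr (heig i)
    have := hd.mul_mul_conjTranspose_same U
    rwa [← Matrix.star_eq_conjTranspose] at this
  -- the middle matrix c • A - Y * Yᵀ is PSD
  have hMeq : c • A - Y * Yᵀ = (1 + ρ * σ)⁻¹ • (σ • (1 : Matrix (Fin n) (Fin n) ℝ) - Y * Yᵀ) := by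
    ext i j
    simp only [hAdef, Matrix.smul_apply, Matrix.sub_apply, Matrix.add_apply, smul_eq_mul, hcdef]
    field_simp
    ring
  have hM : (c • A - Y * Yᵀ).PosSemidef := by
    rw [hMeq]
    refine PosSemidef.of_dotProduct_mulVec_nonneg ?_ ?_
    · show ((1 + ρ * σ)⁻¹ • (σ • (1 : Matrix (Fin n) (Fin n) ℝ) - Y * Yᵀ))ᴴ = _
      rw [conjTranspose_smul, star_trivial, hPSD1.1]
    · intro x
      have := hPSD1.dotProduct_mulVec_nonneg x
      rw [Matrix.smul_mulVec, dotProduct_smul, smul_eq_mul]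
      positivity
  -- conjugate by A⁻¹ * Y
  have key : c • Wbar - Wbar * Wbar = (A⁻¹ * Y)ᴴ * (c • A - Y * Yᵀ) * (A⁻¹ * Y) := by
    have hcan : A * (A⁻¹ * Y) = Y := by
      rw [← Matrix.mul_assoc, hAinv, Matrix.one_mul]
    have hAinvT : (A⁻¹)ᵀ = A⁻¹ := by
      rw [← conjTranspose_eq_transpose_of_trivial, hAinvH]
    simp only [conjTranspose_eq_transpose_of_trivial, transpose_mul, hAinvT,
      Matrix.mul_sub, Matrix.sub_mul, Matrix.mul_smul, Matrix.smul_mul, Matrix.mul_assoc, hcan]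
    simp only [Wbar, ← hAdef, Matrix.mul_assoc]
  rw [key]
  exact hM.conjTranspose_mul_mul_same (A⁻¹ * Y)
end

section
/- Let P ∈ ℝ^{m×m} be symmetric positive semidefinite and M ∈ ℝ^{m×n} with Null(P) ⊆ Null(Mᵀ). Then Range(Mᵀ) = Range(Mᵀ P M). -/
open Matrix

theorem stmt_12 {m n : ℕ} (P : Matrix (Fin m) (Fin m) ℝ) (M : Matrix (Fin m) (Fin n) ℝ)
    (hP : P.PosSemidef)
    (hNull : ∀ v : Fin m → ℝ, P *ᵥ v = 0 → Mᵀ *ᵥ v = 0) :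
    Set.range (fun v : Fin m → ℝ => Mᵀ *ᵥ v) =
      Set.range (fun v : Fin n → ℝ => (Mᵀ * P * M) *ᵥ v) := by
  set A := Mᵀ * P * M with hA
  -- kernel inclusion: ker A ≤ ker M
  have hker : LinearMap.ker A.mulVecLin ≤ LinearMap.ker M.mulVecLin := by
    intro x hx
    simp only [LinearMap.mem_ker, mulVecLin_apply] at hx ⊢
    have h1 : star (M *ᵥ x) ⬝ᵥ P *ᵥ (M *ᵥ x) = 0 := by
      have : x ⬝ᵥ (A *ᵥ x) = 0 := by rw [hx, dotProduct_zero]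
      rw [hA, Matrix.mul_assoc, ← Matrix.mulVec_mulVec, dotProduct_mulVec,
        Matrix.vecMul_transpose, ← Matrix.mulVec_mulVec] at this
      simpa [star, dotProduct_mulVec] using this
    have hPMx : P *ᵥ (M *ᵥ x) = 0 := (hP.dotProduct_mulVec_zero_iff _).mp h1
    have hMtMx : Mᵀ *ᵥ (M *ᵥ x) = 0 := hNull _ hPMx
    have h2 : (M *ᵥ x) ⬝ᵥ (M *ᵥ x) = 0 := by
      have : x ⬝ᵥ (Mᵀ *ᵥ (M *ᵥ x)) = 0 := by rw [hMtMx, dotProduct_zero]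
      rwa [dotProduct_mulVec, Matrix.vecMul_transpose] at this
    exact dotProduct_self_eq_zero.mp h2
  -- range inclusion: range A ≤ range Mᵀ
  have hle : LinearMap.range A.mulVecLin ≤ LinearMap.range Mᵀ.mulVecLin := by
    rintro _ ⟨v, rfl⟩
    exact ⟨(P * M) *ᵥ v, by simp [hA, mulVecLin_apply, Matrix.mulVec_mulVec, Matrix.mul_assoc]⟩
  -- rank comparison
  have hrank : Mᵀ.rank ≤ A.rank := by
    rw [Matrix.rank_transpose]
    have h1 := A.mulVecLin.finrank_range_add_finrank_ker
    have h2 := M.mulVecLin.finrank_range_add_finrank_ker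
    have h3 : Module.finrank ℝ (LinearMap.ker A.mulVecLin) ≤
        Module.finrank ℝ (LinearMap.ker M.mulVecLin) := Submodule.finrank_mono hker
    unfold Matrix.rank
    omega
  have heq : LinearMap.range A.mulVecLin = LinearMap.range Mᵀ.mulVecLin :=
    Submodule.eq_of_le_of_finrank_le hle hrank
  have h4 : Set.range (fun v : Fin m → ℝ => Mᵀ *ᵥ v) =
      (LinearMap.range Mᵀ.mulVecLin : Set (Fin n → ℝ)) := by
    ext x
    constructor
    · rintro ⟨v, rfl⟩; exact ⟨v, (Matrix.mulVecLin_apply _ _)⟩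
    · rintro ⟨v, rfl⟩; exact ⟨v, (Matrix.mulVecLin_apply _ _).symm⟩
  rw [h4, ← heq]
  ext x
  constructor
  · rintro ⟨v, rfl⟩; exact ⟨v, (Matrix.mulVecLin_apply _ _).symm⟩
  · rintro ⟨v, rfl⟩; exact ⟨v, (Matrix.mulVecLin_apply _ _)⟩
end

section
/- Let A ∈ ℝ^{m×n}, b = A x* for some x*, B symmetric positive definite, G symmetric positive definite, ρ > 0, S ∈ ℝ^{m×p}, and define H, Z as in the Penalty Sketch. If x_{k+1} = x_k − B⁻¹ Aᵀ S H Sᵀ (A x_k − b), then ‖x_{k+1} − x*‖²_B = ‖x_k − x*‖²_B − ‖x_k − x*‖²_Z − (1/ρ)‖H Sᵀ A (x_k − x*)‖²_G. -/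
open Matrix

private lemma dp_flip {n m : ℕ} (Q : Matrix (Fin n) (Fin m) ℝ) (v : Fin m → ℝ) (u : Fin n → ℝ) :
    (Q *ᵥ v) ⬝ᵥ u = v ⬝ᵥ (Qᵀ *ᵥ u) := by
  rw [dotProduct_mulVec, vecMul_transpose, dotProduct_comm]

private lemma quad_expand {n : ℕ} (B Z W N : Matrix (Fin n) (Fin n) ℝ) (e : Fin n → ℝ) (c : ℝ)
    (hBN : B * N = Z) (hNtB : Nᵀ * B = Z) (hNtBN : Nᵀ * (B * N) = Z - c • W) :
    (e - N *ᵥ e) ⬝ᵥ (B *ᵥ (e - N *ᵥ e)) =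
      e ⬝ᵥ (B *ᵥ e) - e ⬝ᵥ (Z *ᵥ e) - c * (e ⬝ᵥ (W *ᵥ e)) := by
  have hNZ : Nᵀ * Z = Z - c • W := by rw [← hNtBN, hBN]
  rw [Matrix.mulVec_sub, sub_dotProduct, dotProduct_sub, dotProduct_sub,
    mulVec_mulVec, hBN, dp_flip N e (B *ᵥ e), mulVec_mulVec, hNtB,
    dp_flip N e (Z *ᵥ e), mulVec_mulVec, hNZ, Matrix.sub_mulVec, dotProduct_sub,
    Matrix.smul_mulVec, dotProduct_smul, smul_eq_mul]
  ring

theorem stmt_16 {m n p : ℕ} (A : Matrix (Fin m) (Fin n) ℝ) (S : Matrix (Fin m) (Fin p) ℝ)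
    (B : Matrix (Fin n) (Fin n) ℝ) (G : Matrix (Fin p) (Fin p) ℝ)
    (hB : B.PosDef) (hG : G.PosDef) (ρ : ℝ) (hρ : 0 < ρ)
    (xstar : Fin n → ℝ) (b : Fin m → ℝ) (hb : b = A *ᵥ xstar)
    (xk : Fin n → ℝ) :
    let H := (ρ⁻¹ • G + Sᵀ * A * B⁻¹ * Aᵀ * S)⁻¹
    let Z := Aᵀ * S * H * Sᵀ * A
    let xk1 := xk - (B⁻¹ * Aᵀ * S * H) *ᵥ (Sᵀ *ᵥ (A *ᵥ xk - b))
    let w := (H * Sᵀ * A) *ᵥ (xk - xstar)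
    (xk1 - xstar) ⬝ᵥ (B *ᵥ (xk1 - xstar)) =
      (xk - xstar) ⬝ᵥ (B *ᵥ (xk - xstar)) - (xk - xstar) ⬝ᵥ (Z *ᵥ (xk - xstar)) -
        ρ⁻¹ * (w ⬝ᵥ (G *ᵥ w)) := by
  intro H Z xk1 w
  set M : Matrix (Fin p) (Fin p) ℝ := ρ⁻¹ • G + Sᵀ * A * B⁻¹ * Aᵀ * S with hMdef
  have hsmul : (ρ⁻¹ • G).PosDef := by
    refine ⟨?_, fun x hx => ?_⟩
    · unfold Matrix.IsHermitian
      rw [conjTranspose_smul, hG.1]; simp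
    · have h := mul_pos (inv_pos.mpr hρ) (hG.2 hx)
      simp only [Finsupp.mul_sum, star_trivial] at h
      simp only [Matrix.smul_apply, smul_eq_mul, star_trivial]
      exact lt_of_lt_of_eq h (Finsupp.sum_congr fun i _ => Finsupp.sum_congr fun j _ => by ring)
  have hBinv : (B⁻¹).PosDef := hB.inv
  have hK : (Sᵀ * A * B⁻¹ * Aᵀ * S).PosSemidef := by
    have := hBinv.posSemidef.conjTranspose_mul_mul_same (Aᵀ * S)
    simpa [Matrix.mul_assoc, conjTranspose_mul] using this
  have hMpd : M.PosDef := hsmul.add_posSemidef hK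
  have hHM : H * M = 1 := Matrix.nonsing_inv_mul M hMpd.det_pos.ne'.isUnit
  have hBt : Bᵀ = B := by simpa using hB.1.eq
  have hBinvT : (B⁻¹)ᵀ = B⁻¹ := by rw [transpose_nonsing_inv, hBt]
  have hHt : Hᵀ = H := by simpa using hMpd.inv.1.eq
  have hBBinv : B * B⁻¹ = 1 := Matrix.mul_nonsing_inv B hB.det_pos.ne'.isUnit
  have hBinvB : B⁻¹ * B = 1 := Matrix.nonsing_inv_mul B hB.det_pos.ne'.isUnit
  set N : Matrix (Fin n) (Fin n) ℝ := B⁻¹ * Aᵀ * S * H * Sᵀ * A with hNdef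
  set W : Matrix (Fin n) (Fin n) ℝ := Aᵀ * S * H * G * H * Sᵀ * A with hWdef
  -- matrix identities
  have hNt : Nᵀ = Aᵀ * S * H * Sᵀ * A * B⁻¹ := by
    simp [hNdef, transpose_mul, hHt, hBinvT, Matrix.mul_assoc]
  have hBN : B * N = Z := by
    calc B * N = (B * B⁻¹) * (Aᵀ * S * H * Sᵀ * A) := by
          rw [hNdef]; simp only [Matrix.mul_assoc]
      _ = Z := by rw [hBBinv, Matrix.one_mul]
  have hNtB : Nᵀ * B = Z := by
    calc Nᵀ * B = Aᵀ * S * H * Sᵀ * A * (B⁻¹ * B) := by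
          rw [hNt]; simp only [Matrix.mul_assoc]
      _ = Z := by rw [hBinvB, Matrix.mul_one]
  have hNtBN : Nᵀ * (B * N) = Z - ρ⁻¹ • W := by
    rw [← Matrix.mul_assoc, hNtB, hNdef]
    have h1 : Z * (B⁻¹ * Aᵀ * S * H * Sᵀ * A)
        = Aᵀ * S * H * (Sᵀ * A * B⁻¹ * Aᵀ * S) * (H * Sᵀ * A) := by
      simp only [Z, Matrix.mul_assoc]
    have h2 : Sᵀ * A * B⁻¹ * Aᵀ * S = M - ρ⁻¹ • G := by rw [hMdef]; abel
    rw [h1, h2, Matrix.mul_sub, Matrix.sub_mul]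
    congr 1
    · calc Aᵀ * S * H * M * (H * Sᵀ * A) = Aᵀ * S * ((H * M) * (H * Sᵀ * A)) := by
            simp only [Matrix.mul_assoc]
        _ = Z := by rw [hHM, Matrix.one_mul]; simp only [Z, Matrix.mul_assoc]
    · rw [Matrix.mul_smul, Matrix.smul_mul]
      congr 1
      simp only [hWdef, Matrix.mul_assoc]
  -- vector reduction
  have hxk1 : xk1 - xstar = (xk - xstar) - N *ᵥ (xk - xstar) := by
    have h3 : Sᵀ *ᵥ (A *ᵥ xk - b) = (Sᵀ * A) *ᵥ (xk - xstar) := by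
      rw [hb, ← Matrix.mulVec_sub, mulVec_mulVec]
    show xk - (B⁻¹ * Aᵀ * S * H) *ᵥ (Sᵀ *ᵥ (A *ᵥ xk - b)) - xstar = _
    rw [h3, mulVec_mulVec]
    have h4 : B⁻¹ * Aᵀ * S * H * (Sᵀ * A) = N := by simp only [hNdef, Matrix.mul_assoc]
    rw [h4]
    abel
  have hw : w ⬝ᵥ (G *ᵥ w) = (xk - xstar) ⬝ᵥ (W *ᵥ (xk - xstar)) := by
    have hwt : (H * Sᵀ * A)ᵀ = Aᵀ * S * H := by
      simp [transpose_mul, hHt, Matrix.mul_assoc]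
    show ((H * Sᵀ * A) *ᵥ (xk - xstar)) ⬝ᵥ (G *ᵥ ((H * Sᵀ * A) *ᵥ (xk - xstar))) = _
    rw [dp_flip, hwt, mulVec_mulVec, mulVec_mulVec]
    have : Aᵀ * S * H * G * (H * Sᵀ * A) = W := by simp only [hWdef, Matrix.mul_assoc]
    rw [this]
  rw [hxk1, hw]
  exact quad_expand B Z W N (xk - xstar) ρ⁻¹ hBN hNtB hNtBN
end

section
/- Let A, b, B, G, ρ, S, H, W, Z be as in the ALS method with b = A x*, and let the ALS update be z_{k+1} = H(Sᵀ A x_k − Sᵀ b + (1/ρ)G z_k), x_{k+1} = x_k − B⁻¹ Aᵀ S z_{k+1}. Then the Lyapunov function V(x, z) = ‖x − x*‖²_B + (1/ρ)‖z‖²_G satisfies V(x_{k+1}, z_{k+1}) = V(x_k, z_k) − ‖x_k − x*‖²_Z − (1/ρ)‖z_k‖²_W. -/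
open Matrix

private lemma dp_swap {a b : ℕ} (N : Matrix (Fin a) (Fin b) ℝ) (x : Fin a → ℝ) (y : Fin b → ℝ) :
    (N *ᵥ y) ⬝ᵥ x = y ⬝ᵥ (Nᵀ *ᵥ x) := by
  rw [dotProduct_mulVec, vecMul_transpose]

private lemma posDef_smul {a : ℕ} {M : Matrix (Fin a) (Fin a) ℝ} (hM : M.PosDef) {c : ℝ}
    (hc : 0 < c) : (c • M).PosDef := by
  refine ⟨?_, fun x hx => ?_⟩
  · have := hM.1
    unfold Matrix.IsHermitian at this ⊢
    rw [conjTranspose_smul, this]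
    simp
  · exact (hM.smul hc).2 hx

theorem stmt_17 {m n p : ℕ} (A : Matrix (Fin m) (Fin n) ℝ) (S : Matrix (Fin m) (Fin p) ℝ)
    (B : Matrix (Fin n) (Fin n) ℝ) (G : Matrix (Fin p) (Fin p) ℝ)
    (hB : B.PosDef) (hG : G.PosDef) (ρ : ℝ) (hρ : 0 < ρ)
    (xstar : Fin n → ℝ) (b : Fin m → ℝ) (hb : b = A *ᵥ xstar)
    (xk : Fin n → ℝ) (zk : Fin p → ℝ) :
    let H := (ρ⁻¹ • G + Sᵀ * A * B⁻¹ * Aᵀ * S)⁻¹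
    let Z := Aᵀ * S * H * Sᵀ * A
    let F := (ρ⁻¹ • B + Aᵀ * S * G⁻¹ * Sᵀ * A)⁻¹
    let W := Sᵀ * A * F * Aᵀ * S
    let zk1 := H *ᵥ (Sᵀ *ᵥ (A *ᵥ xk) - Sᵀ *ᵥ b + ρ⁻¹ • (G *ᵥ zk))
    let xk1 := xk - (B⁻¹ * Aᵀ * S) *ᵥ zk1
    let V : (Fin n → ℝ) → (Fin p → ℝ) → ℝ := fun x z =>
      (x - xstar) ⬝ᵥ (B *ᵥ (x - xstar)) + ρ⁻¹ * (z ⬝ᵥ (G *ᵥ z))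
    V xk1 zk1 =
      V xk zk - (xk - xstar) ⬝ᵥ (Z *ᵥ (xk - xstar)) - ρ⁻¹ * (zk ⬝ᵥ (W *ᵥ zk)) := by
  intro H Z F W zk1 xk1 V
  have hρ' : ρ ≠ 0 := ne_of_gt hρ
  have hρi : (0:ℝ) < ρ⁻¹ := inv_pos.mpr hρ
  -- basic symmetry facts
  have sB : Bᵀ = B := by
    have h := hB.1.eq; rwa [conjTranspose_eq_transpose_of_trivial] at h
  have sG : Gᵀ = G := by
    have h := hG.1.eq; rwa [conjTranspose_eq_transpose_of_trivial] at h
  have hBdet : IsUnit B.det := (Matrix.isUnit_iff_isUnit_det B).mp hB.isUnit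
  have hGdet : IsUnit G.det := (Matrix.isUnit_iff_isUnit_det G).mp hG.isUnit
  have sBi : B⁻¹ᵀ = B⁻¹ := by rw [transpose_nonsing_inv, sB]
  have sGi : G⁻¹ᵀ = G⁻¹ := by rw [transpose_nonsing_inv, sG]
  set M : Matrix (Fin p) (Fin n) ℝ := Sᵀ * A with hMdef
  have hMT : Mᵀ = Aᵀ * S := by rw [hMdef, transpose_mul, transpose_transpose]
  -- K := H⁻¹ is positive definite
  set K : Matrix (Fin p) (Fin p) ℝ := ρ⁻¹ • G + M * B⁻¹ * Mᵀ with hKdef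
  have hKH : Sᵀ * A * B⁻¹ * Aᵀ * S = M * B⁻¹ * Mᵀ := by
    rw [hMT, hMdef, Matrix.mul_assoc (Sᵀ * A * B⁻¹)]
  have hHK : H = K⁻¹ := by rw [hKdef, ← hKH]
  have hMBMp : (M * B⁻¹ * Mᵀ).PosSemidef := by
    have h1 := hB.inv.posSemidef
    have := h1.mul_mul_conjTranspose_same M
    rwa [conjTranspose_eq_transpose_of_trivial] at this
  have hK : K.PosDef := (posDef_smul hG hρi).add_posSemidef hMBMp
  have hKdet : IsUnit K.det := (Matrix.isUnit_iff_isUnit_det K).mp hK.isUnit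
  have hKinv : K * H = 1 := by rw [hHK]; exact Matrix.mul_nonsing_inv K hKdet
  have sK : Kᵀ = K := by
    have h := hK.1.eq; rwa [conjTranspose_eq_transpose_of_trivial] at h
  have sH : Hᵀ = H := by rw [hHK, transpose_nonsing_inv, sK]
  -- F and its positive definiteness
  set N : Matrix (Fin n) (Fin n) ℝ := ρ⁻¹ • B + Mᵀ * G⁻¹ * M with hNdef
  have hFN : F = N⁻¹ := by
    show (ρ⁻¹ • B + Aᵀ * S * G⁻¹ * Sᵀ * A)⁻¹ = N⁻¹
    rw [hNdef, hMT, hMdef, Matrix.mul_assoc (Aᵀ * S * G⁻¹)]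
  have hN : N.PosDef := by
    refine (posDef_smul hB hρi).add_posSemidef ?_
    have h1 := hG.inv.posSemidef
    have := h1.mul_mul_conjTranspose_same Mᵀ
    rwa [conjTranspose_eq_transpose_of_trivial, transpose_transpose] at this
  have hNdet : IsUnit N.det := (Matrix.isUnit_iff_isUnit_det N).mp hN.isUnit
  haveI : Invertible ρ := invertibleOfNonzero hρ'
  have hsmul : ρ • K = G + M * (ρ • B⁻¹) * Mᵀ := by
    rw [hKdef, smul_add, smul_smul, mul_inv_cancel₀ hρ', one_smul]
    congr 1
    rw [Matrix.mul_smul, Matrix.smul_mul]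
  have hρB : (ρ • B⁻¹)⁻¹ = ρ⁻¹ • B := by
    rw [Matrix.inv_smul (A := B⁻¹) ρ (Matrix.isUnit_nonsing_inv_det B hBdet),
      Matrix.nonsing_inv_nonsing_inv B hBdet, invOf_eq_inv]
  have hρBunit : IsUnit (ρ • B⁻¹) := (posDef_smul hB.inv hρ).isUnit
  have hNunit : IsUnit ((ρ • B⁻¹)⁻¹ + Mᵀ * G⁻¹ * M) := by
    rw [hρB, ← hNdef]; exact hN.isUnit
  have woodbury : ρ⁻¹ • H = G⁻¹ - G⁻¹ * (M * F * Mᵀ) * G⁻¹ := by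
    have h1 := Matrix.add_mul_mul_inv_eq_sub G M (ρ • B⁻¹) Mᵀ hG.isUnit hρBunit hNunit
    rw [hρB, ← hNdef, ← hFN, ← hsmul] at h1
    have hinv : ρ⁻¹ • K⁻¹ = (ρ • K)⁻¹ := by
      rw [Matrix.inv_smul (A := K) ρ hKdet, invOf_eq_inv]
    rw [hHK, hinv, h1]
    simp only [Matrix.mul_assoc]
  -- key identity: ρ⁻¹ • (G * H * G) = G - M * F * Mᵀ
  have hGG : G * G⁻¹ = 1 := Matrix.mul_nonsing_inv G hGdet
  have hGG' : G⁻¹ * G = 1 := Matrix.nonsing_inv_mul G hGdet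
  have key : ρ⁻¹ • (G * H * G) = G - M * F * Mᵀ := by
    have h2 : G * (ρ⁻¹ • H) * G = G * (G⁻¹ - G⁻¹ * (M * F * Mᵀ) * G⁻¹) * G := by rw [woodbury]
    rw [Matrix.mul_smul, Matrix.smul_mul] at h2
    rw [h2, Matrix.mul_sub, Matrix.sub_mul, hGG, Matrix.one_mul]
    congr 1
    rw [show G * (G⁻¹ * (M * F * Mᵀ) * G⁻¹) * G
        = (G * G⁻¹) * (M * F * Mᵀ) * (G⁻¹ * G) from by noncomm_ring,
      hGG, hGG', Matrix.one_mul, Matrix.mul_one]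
  -- vector setup
  set e : Fin n → ℝ := xk - xstar with hedef
  set u : Fin p → ℝ := M *ᵥ e with hudef
  set w : Fin p → ℝ := ρ⁻¹ • (G *ᵥ zk) with hwdef
  have hz1 : zk1 = H *ᵥ (u + w) := by
    show H *ᵥ (Sᵀ *ᵥ (A *ᵥ xk) - Sᵀ *ᵥ b + ρ⁻¹ • (G *ᵥ zk)) = _
    rw [hb, ← mulVec_sub, ← mulVec_sub, ← hedef, mulVec_mulVec, ← hMdef, ← hudef, ← hwdef]
  set z1 : Fin p → ℝ := H *ᵥ (u + w) with hz1def
  have hx1 : xk1 - xstar = e - B⁻¹ *ᵥ (Mᵀ *ᵥ z1) := by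
    have h2 : B⁻¹ *ᵥ (Mᵀ *ᵥ z1) = (B⁻¹ * Aᵀ * S) *ᵥ z1 := by
      rw [mulVec_mulVec, hMT, ← Matrix.mul_assoc]
    rw [h2]
    show xk - (B⁻¹ * Aᵀ * S) *ᵥ zk1 - xstar = _
    rw [hz1, hedef]
    abel
  -- the quadratic expansion
  have hBC : ∀ v : Fin n → ℝ, B *ᵥ (B⁻¹ *ᵥ v) = v := fun v => by
    rw [mulVec_mulVec, Matrix.mul_nonsing_inv B hBdet, one_mulVec]
  have hCB : ∀ v : Fin n → ℝ, B⁻¹ *ᵥ (B *ᵥ v) = v := fun v => by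
    rw [mulVec_mulVec, Matrix.nonsing_inv_mul B hBdet, one_mulVec]
  have hKz : K *ᵥ z1 = u + w := by
    rw [hz1def, mulVec_mulVec, hKinv, one_mulVec]
  -- expand V xk1 zk1
  have expand : V xk1 zk1 = e ⬝ᵥ (B *ᵥ e) - z1 ⬝ᵥ u + z1 ⬝ᵥ w := by
    show (xk1 - xstar) ⬝ᵥ (B *ᵥ (xk1 - xstar)) + ρ⁻¹ * (zk1 ⬝ᵥ (G *ᵥ zk1)) = _
    rw [hx1, hz1]
    have h1 : B *ᵥ (e - B⁻¹ *ᵥ (Mᵀ *ᵥ z1)) = B *ᵥ e - Mᵀ *ᵥ z1 := by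
      rw [mulVec_sub, hBC]
    rw [h1]
    have e_v : e ⬝ᵥ (Mᵀ *ᵥ z1) = u ⬝ᵥ z1 := by
      rw [hudef, dp_swap M z1 e]
    have cv_be : (B⁻¹ *ᵥ (Mᵀ *ᵥ z1)) ⬝ᵥ (B *ᵥ e) = z1 ⬝ᵥ u := by
      rw [dp_swap B⁻¹ (B *ᵥ e) (Mᵀ *ᵥ z1), sBi, hCB, dp_swap Mᵀ e z1, transpose_transpose,
        ← hudef]
    have cv_v : (B⁻¹ *ᵥ (Mᵀ *ᵥ z1)) ⬝ᵥ (Mᵀ *ᵥ z1) = z1 ⬝ᵥ ((M * B⁻¹ * Mᵀ) *ᵥ z1) := by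
      rw [dp_swap B⁻¹ (Mᵀ *ᵥ z1) (Mᵀ *ᵥ z1), sBi, dp_swap Mᵀ (B⁻¹ *ᵥ (Mᵀ *ᵥ z1)) z1,
        transpose_transpose, mulVec_mulVec, mulVec_mulVec]
    have hGz : ρ⁻¹ * (z1 ⬝ᵥ (G *ᵥ z1)) = z1 ⬝ᵥ ((ρ⁻¹ • G) *ᵥ z1) := by
      rw [smul_mulVec, dotProduct_smul, smul_eq_mul]
    have hsum : z1 ⬝ᵥ ((M * B⁻¹ * Mᵀ) *ᵥ z1) + z1 ⬝ᵥ ((ρ⁻¹ • G) *ᵥ z1) = z1 ⬝ᵥ (u + w) := by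
      rw [← dotProduct_add, ← add_mulVec, ← hKz, hKdef]
      congr 2
      abel
    have hadd : z1 ⬝ᵥ (u + w) = z1 ⬝ᵥ u + z1 ⬝ᵥ w := dotProduct_add z1 u w
    have hcomm : u ⬝ᵥ z1 = z1 ⬝ᵥ u := dotProduct_comm u z1
    rw [sub_dotProduct, dotProduct_sub, dotProduct_sub, e_v, cv_be, cv_v, hGz]
    linarith [hsum, hadd, hcomm]
  -- compute z1 ⬝ᵥ u and z1 ⬝ᵥ w
  have hHuv : ∀ v : Fin p → ℝ, z1 ⬝ᵥ v = (u + w) ⬝ᵥ (H *ᵥ v) := fun v => by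
    rw [hz1def, dp_swap H v (u + w), sH]
  have zu : z1 ⬝ᵥ u = u ⬝ᵥ (H *ᵥ u) + w ⬝ᵥ (H *ᵥ u) := by
    rw [hHuv u, add_dotProduct]
  have zw : z1 ⬝ᵥ w = u ⬝ᵥ (H *ᵥ w) + w ⬝ᵥ (H *ᵥ w) := by
    rw [hHuv w, add_dotProduct]
  have cross : w ⬝ᵥ (H *ᵥ u) = u ⬝ᵥ (H *ᵥ w) := by
    rw [dotProduct_comm, dp_swap H w u, sH]
  -- u ⬝ᵥ H u = e ⬝ᵥ Z e
  have uHu : u ⬝ᵥ (H *ᵥ u) = e ⬝ᵥ (Z *ᵥ e) := by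
    have hZ : Z = Mᵀ * H * M := by
      show Aᵀ * S * H * Sᵀ * A = _
      rw [hMT, hMdef, Matrix.mul_assoc (Aᵀ * S * H)]
    rw [hZ, hudef, dp_swap M (H *ᵥ (M *ᵥ e)) e, mulVec_mulVec, mulVec_mulVec]
  -- w ⬝ᵥ H w = ρ⁻¹ * zk ⬝ G zk - ρ⁻¹ * zk ⬝ W zk
  have hWMF : W = M * F * Mᵀ := by
    show Sᵀ * A * F * Aᵀ * S = _
    rw [hMT, hMdef, Matrix.mul_assoc (Sᵀ * A * F)]
  have wHw : w ⬝ᵥ (H *ᵥ w) = ρ⁻¹ * (zk ⬝ᵥ (G *ᵥ zk)) - ρ⁻¹ * (zk ⬝ᵥ (W *ᵥ zk)) := by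
    have h1 : w ⬝ᵥ (H *ᵥ w) = ρ⁻¹ * (zk ⬝ᵥ ((ρ⁻¹ • (G * H * G)) *ᵥ zk)) := by
      rw [hwdef, smul_dotProduct, mulVec_smul, dotProduct_smul, smul_mulVec,
        dotProduct_smul]
      simp only [smul_eq_mul]
      rw [dp_swap G (H *ᵥ (G *ᵥ zk)) zk, sG, mulVec_mulVec, mulVec_mulVec]
    rw [h1, key, hWMF, sub_mulVec, dotProduct_sub, mul_sub]
  -- conclude
  have rhsV : V xk zk = e ⬝ᵥ (B *ᵥ e) + ρ⁻¹ * (zk ⬝ᵥ (G *ᵥ zk)) := rfl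
  rw [expand, rhsV, zu, zw, cross, uHu, wHw]
  ring
end
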